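/- Let S be a Schur ring over a group G and let α ∈ S. Then the subgroup H = ⟨supp(α)⟩ generated by the support of α is an S-subgroup of G. -/

import Mathlib

/-- The Hadamard (coefficientwise) product on the group algebra. -/
noncomputable def hadamard {F G : Type*} [Semiring F]
    (α β : MonoidAlgebra F G) : MonoidAlgebra F G :=
  MonoidAlgebra.ofCoeff (Finsupp.zipWith (· * ·) (mul_zero 0) α.coeff β.coeff)

/-- The simple quantity `C̄ = ∑_{g ∈ C} g` of a finite subset of `G`. -/
noncomputable def simpleQuantity (F : Type*) {G : Type*} [Semiring F] (C : Finset G) :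
    MonoidAlgebra F G :=
  ∑ g ∈ C, MonoidAlgebra.single g 1

/-- A partition of `G` into finite (nonempty) classes, i.e. a partition of finite support. -/
structure FinPartition (G : Type*) where
  classes : Set (Finset G)
  nonempty : ∀ C ∈ classes, C.Nonempty
  existsUnique_mem : ∀ g : G, ∃! C, C ∈ classes ∧ g ∈ C

/-- The Schur module associated to a partition of finite support: the `F`-span of the
simple quantities of the classes. -/
noncomputable def schurModule (F : Type*) {G : Type*} [Field F] (P : FinPartition G) :
    Submodule F (MonoidAlgebra F G) :=
  Submodule.span F (simpleQuantity F '' P.classes)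

/-- A Schur ring over a group `G` with coefficients in `F`, given by its partition
of finite support: `{1}` is a class, classes are closed under inversion, and the product
of two simple quantities is a finite `F`-linear combination of simple quantities. -/
structure SchurRing (F G : Type*) [Field F] [Group G] extends FinPartition G where
  one_mem : ({1} : Finset G) ∈ classes
  inv_mem : ∀ C ∈ classes, ∃ D ∈ classes, ∀ g : G, g ∈ D ↔ g⁻¹ ∈ C
  mul_mem : ∀ C ∈ classes, ∀ D ∈ classes,
    simpleQuantity F C * simpleQuantity F D ∈
      Submodule.span F (simpleQuantity F '' classes)

/-- The underlying Schur ring, as a submodule of the group algebra. -/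
noncomputable def SchurRing.carrier {F G : Type*} [Field F] [Group G] (S : SchurRing F G) :
    Submodule F (MonoidAlgebra F G) :=
  schurModule F S.toFinPartition

/-- A subset of `G` is an `S`-set if it is a union of classes of the partition. -/
def IsSSet {F G : Type*} [Field F] [Group G] (S : SchurRing F G) (X : Set G) : Prop :=
  ∃ E ⊆ S.classes, X = ⋃ C ∈ E, (C : Set G)

/-- The group ring `F[H]` of a subgroup, viewed inside `F[G]`. -/
noncomputable def groupRingOf (F : Type*) {G : Type*} [Field F] [Group G] (H : Subgroup G) :
    Submodule F (MonoidAlgebra F G) :=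
  Submodule.span F ((fun g => (MonoidAlgebra.single g 1 : MonoidAlgebra F G)) '' (H : Set G))

lemma simpleQuantity_apply {F G : Type*} [Semiring F] [DecidableEq G] (C : Finset G) (g : G) :
    (simpleQuantity F C).coeff g = if g ∈ C then 1 else 0 := by
  rw [simpleQuantity, MonoidAlgebra.coeff_sum, Finsupp.finset_sum_apply]
  simp [MonoidAlgebra.coeff_single, Finsupp.single_apply]

lemma constant_on_classes {F G : Type*} [Field F] (P : FinPartition G)
    {β : MonoidAlgebra F G} (hβ : β ∈ schurModule F P) {C : Finset G}
    (hC : C ∈ P.classes) {g h : G} (hg : g ∈ C) (hh : h ∈ C) : β.coeff g = β.coeff h := by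
  classical
  induction hβ using Submodule.span_induction with
  | mem x hx =>
    obtain ⟨D, hD, rfl⟩ := hx
    rw [simpleQuantity_apply, simpleQuantity_apply]
    by_cases hgD : g ∈ D
    · have hCD : C = D := (P.existsUnique_mem g).unique ⟨hC, hg⟩ ⟨hD, hgD⟩
      simp [hgD, hCD ▸ hh]
    · have hhD : h ∉ D := fun hhD => hgD (by
        have hCD : C = D := (P.existsUnique_mem h).unique ⟨hC, hh⟩ ⟨hD, hhD⟩
        exact hCD ▸ hg)
      simp [hgD, hhD]
  | zero => simp
  | add x y _ _ ihx ihy => rw [MonoidAlgebra.coeff_add, Finsupp.add_apply, Finsupp.add_apply, ihx, ihy]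
  | smul c x _ ih => rw [MonoidAlgebra.coeff_smul, Finsupp.smul_apply, Finsupp.smul_apply, ih]

lemma mul_sq_apply_ne_zero {F G : Type*} [Field F] [CharZero F] [Group G]
    (C D : Finset G) (g : G) :
    (simpleQuantity F C * simpleQuantity F D).coeff g ≠ 0 ↔ ∃ c ∈ C, ∃ d ∈ D, c * d = g := by
  classical
  have h1 : (simpleQuantity F C * simpleQuantity F D).coeff g
      = (((C ×ˢ D).filter (fun p => p.1 * p.2 = g)).card : F) := by
    rw [simpleQuantity, simpleQuantity, Finset.sum_mul_sum]
    simp only [MonoidAlgebra.single_mul_single, one_mul]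
    rw [← Finset.sum_product']
    rw [MonoidAlgebra.coeff_sum, Finsupp.finset_sum_apply]
    rw [← Finset.sum_boole]
    apply Finset.sum_congr rfl
    intro p _
    simp [MonoidAlgebra.coeff_single, Finsupp.single_apply]
  rw [h1, Nat.cast_ne_zero, Finset.card_ne_zero, Finset.filter_nonempty_iff]
  constructor
  · rintro ⟨⟨a, b⟩, hab, he⟩
    rw [Finset.mem_product] at hab
    exact ⟨a, hab.1, b, hab.2, he⟩
  · rintro ⟨a, ha, b, hb, hab⟩
    exact ⟨(a, b), Finset.mem_product.mpr ⟨ha, hb⟩, hab⟩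

theorem stmt9 {F G : Type*} [Field F] [CharZero F] [Group G]
    (S : SchurRing F G) (α : MonoidAlgebra F G) (hα : α ∈ S.carrier) :
    IsSSet S ((Subgroup.closure (α.coeff.support : Set G) : Subgroup G) : Set G) := by
  classical
  set H : Subgroup G := Subgroup.closure (α.coeff.support : Set G) with hH
  -- key: every class containing an element of H is contained in H
  have key : ∀ g ∈ H, ∀ C ∈ S.classes, g ∈ C → (C : Set G) ⊆ (H : Set G) := by
    intro g hg
    induction hg using Subgroup.closure_induction with
    | mem x hx =>
      intro C hC hxC y hy
      have hy' : α.coeff y ≠ 0 := by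
        have := constant_on_classes S.toFinPartition hα hC hy hxC
        rw [this]
        exact Finsupp.mem_support_iff.mp hx
      exact Subgroup.subset_closure (Finsupp.mem_support_iff.mpr hy')
    | one =>
      intro C hC h1C
      have : C = ({1} : Finset G) :=
        (S.existsUnique_mem 1).unique ⟨hC, h1C⟩ ⟨S.one_mem, Finset.mem_singleton_self 1⟩
      intro y hy
      rw [this] at hy
      simp only [Finset.coe_singleton, Set.mem_singleton_iff] at hy
      rw [hy]
      exact H.one_mem
    | mul x y hx hy ihx ihy =>
      intro C hC hxyC z hz
      obtain ⟨Cx, ⟨hCx, hxCx⟩, _⟩ := S.existsUnique_mem x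
      obtain ⟨Cy, ⟨hCy, hyCy⟩, _⟩ := S.existsUnique_mem y
      have hβ := S.mul_mem Cx hCx Cy hCy
      have hxy_ne : (simpleQuantity F Cx * simpleQuantity F Cy).coeff (x * y) ≠ 0 :=
        (mul_sq_apply_ne_zero Cx Cy (x * y)).mpr ⟨x, hxCx, y, hyCy, rfl⟩
      have hz_ne : (simpleQuantity F Cx * simpleQuantity F Cy).coeff z ≠ 0 := by
        have := constant_on_classes S.toFinPartition hβ hC hz hxyC
        rw [this]; exact hxy_ne
      obtain ⟨c, hc, d, hd, hcd⟩ := (mul_sq_apply_ne_zero Cx Cy z).mp hz_ne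
      rw [← hcd]
      exact H.mul_mem (ihx Cx hCx hxCx hc) (ihy Cy hCy hyCy hd)
    | inv x hx ihx =>
      intro C hC hxC z hz
      obtain ⟨Cx, ⟨hCx, hxCx⟩, _⟩ := S.existsUnique_mem x
      obtain ⟨D, hD, hDiff⟩ := S.inv_mem Cx hCx
      have hxD : x⁻¹ ∈ D := (hDiff x⁻¹).mpr (by rw [inv_inv]; exact hxCx)
      have hCD : C = D := (S.existsUnique_mem x⁻¹).unique ⟨hC, hxC⟩ ⟨hD, hxD⟩
      have hzCx : z⁻¹ ∈ Cx := (hDiff z).mp (hCD ▸ hz)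
      have : z⁻¹ ∈ H := ihx Cx hCx hxCx hzCx
      simpa using H.inv_mem this
  refine ⟨{C ∈ S.classes | (C : Set G) ⊆ (H : Set G)}, fun C hC => hC.1, ?_⟩
  ext g
  simp only [Set.mem_iUnion, Set.mem_setOf_eq]
  constructor
  · intro hg
    obtain ⟨C, ⟨hC, hgC⟩, _⟩ := S.existsUnique_mem g
    exact ⟨C, ⟨hC, key g hg C hC hgC⟩, hgC⟩
  · rintro ⟨C, ⟨hC, hCH⟩, hgC⟩
    exact hCH hgC
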